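/- arXiv:2206.10308 — 2 statements merged into one kernel-verified Lean document; each statement's English description precedes it below -/
import Mathlib

section
/- Let (P_n)_{n≥0} be a monic OPS with recurrence coefficients (B_n), (C_n), and suppose there exist complex sequences (a_n)_{n≥0}, (b_n)_{n≥0}, (c_n)_{n≥0} with c_0 = 0 such that S_q P_n = (a_n·X + b_n)·P_n + c_n·P_{n−1} for all n ≥ 0 (this is the case a = 0, c = −1 of the structure relation (a·X − c)·S_q P_n = (a_n·X + b_n)·P_n + c_n·P_{n−1}). Then a_n = 0 and b_n = α_n for all n ≥ 0, and c_n = (α_n − α_{n−1})·(B_0 + B_1 + ⋯ + B_{n−1}) for all n ≥ 1. -/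
noncomputable section

/-- Real power `q ^ r` (with `q > 0` in applications), coerced into `ℂ`. -/
def rp (q : ℝ) (r : ℝ) : ℂ := ((q ^ r : ℝ) : ℂ)

/-- The lattice point `x(z) = (z + z⁻¹)/2`. -/
def xl (z : ℂ) : ℂ := (z + z⁻¹) / 2

/-- `x₊(z) = (q^{1/2} z + q^{-1/2} z⁻¹)/2`. -/
def xp (q : ℝ) (z : ℂ) : ℂ := (rp q (1/2) * z + rp q (-(1/2)) * z⁻¹) / 2

/-- `x₋(z) = (q^{-1/2} z + q^{1/2} z⁻¹)/2`. -/
def xm (q : ℝ) (z : ℂ) : ℂ := (rp q (-(1/2)) * z + rp q (1/2) * z⁻¹) / 2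

/-- `IsSq q f g` means `g = S_q f`, i.e. `g` satisfies the defining property of the
averaging operator applied to `f`. -/
def IsSq (q : ℝ) (f g : Polynomial ℂ) : Prop :=
  ∀ z : ℂ, z ≠ 0 → Polynomial.eval (xl z) g =
    (Polynomial.eval (xp q z) f + Polynomial.eval (xm q z) f) / 2

/-- `IsDq q f g` means `g = D_q f`, i.e. `g` satisfies the defining property of the
Askey-Wilson operator applied to `f`. -/
def IsDq (q : ℝ) (f g : Polynomial ℂ) : Prop :=
  ∀ z : ℂ, z ≠ 0 → Polynomial.eval (xl z) g * (xp q z - xm q z) =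
    Polynomial.eval (xp q z) f - Polynomial.eval (xm q z) f

/-- `α = (q^{1/2} + q^{-1/2})/2`. -/
def alphaC (q : ℝ) : ℂ := (rp q (1/2) + rp q (-(1/2))) / 2

/-- `α_n = (q^{n/2} + q^{-n/2})/2`. -/
def alphaN (q : ℝ) (n : ℕ) : ℂ := (rp q ((n : ℝ)/2) + rp q (-((n : ℝ)/2))) / 2

/-- `γ_n = (q^{n/2} - q^{-n/2})/(q^{1/2} - q^{-1/2})`. -/
def gammaN (q : ℝ) (n : ℕ) : ℂ :=
  (rp q ((n : ℝ)/2) - rp q (-((n : ℝ)/2))) / (rp q (1/2) - rp q (-(1/2)))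

/-- The monic Chebyshev polynomials of the first kind. -/
def chebM (n : ℕ) : Polynomial ℂ :=
  if n = 0 then 1 else (2 : ℂ) ^ (1 - (n : ℤ)) • Polynomial.Chebyshev.T ℂ (n : ℤ)

end


open Polynomial

section RP
variable {q : ℝ} (hq0 : 0 < q)
include hq0

lemma rp_ne (r : ℝ) : rp q r ≠ 0 := by
  simp [rp, Complex.ofReal_ne_zero, ne_of_gt (Real.rpow_pos_of_pos hq0 r)]

lemma rp_mul_neg (r : ℝ) : rp q r * rp q (-r) = 1 := by
  simp only [rp, ← Complex.ofReal_mul, ← Real.rpow_add hq0]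
  norm_num

lemma rp_inv (r : ℝ) : (rp q r)⁻¹ = rp q (-r) :=
  inv_eq_of_mul_eq_one_right (rp_mul_neg hq0 r)

lemma rp_pow (r : ℝ) (n : ℕ) : (rp q r)^n = rp q (r * n) := by
  simp only [rp, ← Complex.ofReal_pow, ← Real.rpow_natCast (q ^ r) n, ← Real.rpow_mul hq0.le]

end RP

lemma alphaN_zero (q : ℝ) : alphaN q 0 = 1 := by
  simp [alphaN, rp]

noncomputable def tC : ℕ → Polynomial ℂ
  | 0 => 1
  | 1 => X
  | (n+2) => 2 * X * tC (n+1) - tC n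

lemma tC_eval (z : ℂ) (hz : z ≠ 0) : ∀ n, (tC n).eval ((z + z⁻¹)/2) = (z^n + (z⁻¹)^n)/2 := by
  intro n
  induction n using Nat.twoStepInduction with
  | zero => simp [tC]
  | one => simp [tC]
  | more n ih1 ih2 =>
    show ((2 * X * tC (n+1) - tC n).eval _) = _
    simp only [Polynomial.eval_sub, Polynomial.eval_mul, Polynomial.eval_ofNat, Polynomial.eval_X,
      ih1, ih2]
    linear_combination (((z:ℂ)^n + (z⁻¹)^n)/2) * mul_inv_cancel₀ hz
lemma tC_natDegree_le : ∀ n, (tC n).natDegree ≤ n := by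
  intro n
  induction n using Nat.twoStepInduction with
  | zero => simp [tC]
  | one => simp [tC]
  | more n ih1 ih2 =>
    show (2 * X * tC (n+1) - tC n).natDegree ≤ n + 2
    refine le_trans (Polynomial.natDegree_sub_le _ _) ?_
    simp only [max_le_iff]
    constructor
    · refine le_trans (Polynomial.natDegree_mul_le) ?_
      have : (2 * X : Polynomial ℂ).natDegree ≤ 1 := by
        refine le_trans (Polynomial.natDegree_mul_le) ?_; simp
      omega
    · omega
lemma tC_coeff_top : ∀ n, (tC n).coeff n = 2^(n-1) := by
  intro n
  induction n using Nat.twoStepInduction with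
  | zero => simp [tC]
  | one => simp [tC]
  | more n ih1 ih2 =>
    show ((2 * X * tC (n+1) - tC n : Polynomial ℂ)).coeff (n+2) = _
    rw [Polynomial.coeff_sub, mul_assoc, Polynomial.coeff_ofNat_mul, Polynomial.coeff_X_mul, ih2,
      Polynomial.coeff_eq_zero_of_natDegree_lt (lt_of_le_of_lt (tC_natDegree_le n) (by omega))]
    simp [pow_succ]
    ring
lemma tC_coeff_sub : ∀ n, (tC (n+1)).coeff n = 0 := by
  intro n
  induction n using Nat.twoStepInduction with
  | zero => simp [tC]
  | one => show ((2 * X * tC 1 - tC 0 : Polynomial ℂ)).coeff 1 = 0; simp [tC, Polynomial.coeff_one]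
  | more n ih1 ih2 =>
    show ((2 * X * tC (n+2) - tC (n+1) : Polynomial ℂ)).coeff (n+2) = 0
    rw [Polynomial.coeff_sub, mul_assoc, Polynomial.coeff_ofNat_mul, Polynomial.coeff_X_mul, ih2,
      Polynomial.coeff_eq_zero_of_natDegree_lt (lt_of_le_of_lt (tC_natDegree_le (n+1)) (by omega))]
    simp

section Sq
variable {q : ℝ} (hq0 : 0 < q)
include hq0

lemma tC_eval_xp (z : ℂ) (hz : z ≠ 0) (n : ℕ) :
    (tC n).eval (xp q z) = (rp q ((n:ℝ)/2) * z^n + rp q (-((n:ℝ)/2)) * (z⁻¹)^n)/2 := by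
  have hw : rp q (1/2) * z ≠ 0 := mul_ne_zero (rp_ne hq0 _) hz
  have hxp : xp q z = ((rp q (1/2) * z) + (rp q (1/2) * z)⁻¹)/2 := by
    rw [mul_inv, rp_inv hq0]
    rfl
  rw [hxp, tC_eval _ hw]
  simp only [mul_pow, mul_inv, inv_pow, rp_inv hq0, rp_pow hq0,
    show (1/2:ℝ)*(n:ℝ) = (n:ℝ)/2 from by ring, show (-(1/2):ℝ)*(n:ℝ) = -((n:ℝ)/2) from by ring]

lemma tC_eval_xm (z : ℂ) (hz : z ≠ 0) (n : ℕ) :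
    (tC n).eval (xm q z) = (rp q (-((n:ℝ)/2)) * z^n + rp q ((n:ℝ)/2) * (z⁻¹)^n)/2 := by
  have hw : rp q (-(1/2)) * z ≠ 0 := mul_ne_zero (rp_ne hq0 _) hz
  have hxm : xm q z = ((rp q (-(1/2)) * z) + (rp q (-(1/2)) * z)⁻¹)/2 := by
    rw [mul_inv, rp_inv hq0, neg_neg]
    rfl
  rw [hxm, tC_eval _ hw]
  simp only [mul_pow, mul_inv, inv_pow, rp_inv hq0, rp_pow hq0, neg_neg,
    show (1/2:ℝ)*(n:ℝ) = (n:ℝ)/2 from by ring, show (-(1/2):ℝ)*(n:ℝ) = -((n:ℝ)/2) from by ring]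

lemma isSq_tC (n : ℕ) : IsSq q (tC n) (Polynomial.C (alphaN q n) * tC n) := by
  intro z hz
  rw [Polynomial.eval_mul, Polynomial.eval_C, tC_eval_xp hq0 z hz, tC_eval_xm hq0 z hz]
  show alphaN q n * (tC n).eval ((z + z⁻¹)/2) = _
  rw [tC_eval z hz n, alphaN]
  ring

end Sq

lemma IsSq.add {q : ℝ} {f1 g1 f2 g2 : Polynomial ℂ} (h1 : IsSq q f1 g1) (h2 : IsSq q f2 g2) :
    IsSq q (f1 + f2) (g1 + g2) := by
  intro z hz
  simp only [Polynomial.eval_add, h1 z hz, h2 z hz]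
  ring

lemma IsSq.cmul {q : ℝ} {f g : Polynomial ℂ} (a : ℂ) (h : IsSq q f g) :
    IsSq q (Polynomial.C a * f) (Polynomial.C a * g) := by
  intro z hz
  simp only [Polynomial.eval_mul, Polynomial.eval_C, h z hz]
  ring

lemma exSq {q : ℝ} (hq0 : 0 < q) : ∀ n : ℕ, ∀ f : Polynomial ℂ, f.natDegree ≤ n →
    ∃ g : Polynomial ℂ, IsSq q f g ∧ g.natDegree ≤ n ∧
      g.coeff n = alphaN q n * f.coeff n ∧
      g.coeff (n-1) = alphaN q (n-1) * f.coeff (n-1) := by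
  intro n
  induction n with
  | zero =>
    intro f hf
    refine ⟨f, ?_, hf, by simp [alphaN_zero], by simp [alphaN_zero]⟩
    intro z hz
    rw [Polynomial.eq_C_of_natDegree_le_zero hf]
    simp
  | succ n ih =>
    intro f hf
    set s : ℂ := f.coeff (n+1) / 2^n with hs
    set r : Polynomial ℂ := f - Polynomial.C s * tC (n+1) with hr
    have htop : (tC (n+1)).coeff (n+1) = 2^n := by
      have := tC_coeff_top (n+1); rwa [Nat.add_sub_cancel] at this
    have hrn : r.natDegree ≤ n := by
      rw [Polynomial.natDegree_le_iff_coeff_eq_zero]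
      intro m hm
      rw [hr, Polynomial.coeff_sub, Polynomial.coeff_C_mul]
      rcases eq_or_lt_of_le (Nat.succ_le_of_lt hm) with h | h
      · rw [← h, htop, hs, div_mul_cancel₀ _ (by norm_num : (2:ℂ)^n ≠ 0), sub_self]
      · rw [Polynomial.coeff_eq_zero_of_natDegree_lt (lt_of_le_of_lt hf h),
          Polynomial.coeff_eq_zero_of_natDegree_lt (lt_of_le_of_lt (tC_natDegree_le (n+1)) h)]
        ring
    obtain ⟨gr, hgr, hgrdeg, hgr1, hgr2⟩ := ih r hrn
    refine ⟨Polynomial.C (alphaN q (n+1)) * (Polynomial.C s * tC (n+1)) + gr, ?_, ?_, ?_, ?_⟩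
    · have hf' : f = Polynomial.C s * tC (n+1) + r := by rw [hr]; ring
      rw [hf', show Polynomial.C (alphaN q (n+1)) * (Polynomial.C s * tC (n+1))
        = Polynomial.C s * (Polynomial.C (alphaN q (n+1)) * tC (n+1)) from by ring]
      exact IsSq.add (IsSq.cmul s (isSq_tC hq0 (n+1))) hgr
    · refine le_trans (Polynomial.natDegree_add_le _ _) ?_
      simp only [max_le_iff]
      exact ⟨le_trans (Polynomial.natDegree_C_mul_le _ _)
        (le_trans (Polynomial.natDegree_C_mul_le _ _) (tC_natDegree_le (n+1))), by omega⟩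
    · rw [Polynomial.coeff_add, Polynomial.coeff_C_mul, Polynomial.coeff_C_mul, htop,
        Polynomial.coeff_eq_zero_of_natDegree_lt (lt_of_le_of_lt hgrdeg (by omega)), hs,
        div_mul_cancel₀ _ (by norm_num : (2:ℂ)^n ≠ 0)]
      ring
    · rw [Nat.add_sub_cancel, Polynomial.coeff_add, Polynomial.coeff_C_mul,
        Polynomial.coeff_C_mul, tC_coeff_sub n, hgr1]
      have : r.coeff n = f.coeff n := by
        rw [hr, Polynomial.coeff_sub, Polynomial.coeff_C_mul, tC_coeff_sub n]
        ring
      rw [this]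
      ring

lemma exists_xl (x : ℂ) : ∃ z : ℂ, z ≠ 0 ∧ xl z = x := by
  obtain ⟨z, hz⟩ := Complex.isAlgClosed.exists_root (p := X^2 - Polynomial.C (2*x) * X + 1) (by
    have h2 : ((X:Polynomial ℂ)^2 - Polynomial.C (2*x) * X + 1).degree = 2 := by
      compute_degree!
    rw [h2]; norm_num)
  have hz' : z^2 - 2*x*z + 1 = 0 := by
    have h3 := hz
    simp only [Polynomial.IsRoot, Polynomial.eval_add, Polynomial.eval_sub, Polynomial.eval_mul,
      Polynomial.eval_pow, Polynomial.eval_X, Polynomial.eval_C, Polynomial.eval_one] at h3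
    linear_combination h3
  have hz0 : z ≠ 0 := by
    rintro rfl
    exact one_ne_zero (by linear_combination hz')
  refine ⟨z, hz0, ?_⟩
  show (z + z⁻¹)/2 = x
  field_simp
  linear_combination hz'

lemma sq_unique {q : ℝ} {f g1 g2 : Polynomial ℂ} (h1 : IsSq q f g1) (h2 : IsSq q f g2) :
    g1 = g2 := by
  apply Polynomial.funext
  intro x
  obtain ⟨z, hz0, hzx⟩ := exists_xl x
  rw [← hzx, h1 z hz0, h2 z hz0]

theorem stmt5 (q : ℝ) (hq0 : 0 < q) (hq1 : q < 1)
    (P : ℕ → Polynomial ℂ) (B C : ℕ → ℂ)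
    (hmonic : ∀ n, (P n).Monic) (hdeg : ∀ n, (P n).natDegree = n)
    (hCne : ∀ n, 1 ≤ n → C n ≠ 0)
    (hrec0 : Polynomial.X * P 0 = P 1 + Polynomial.C (B 0) * P 0)
    (hrec : ∀ n : ℕ, Polynomial.X * P (n + 1) =
      P (n + 2) + Polynomial.C (B (n + 1)) * P (n + 1) + Polynomial.C (C (n + 1)) * P n)
    (sa sb sc : ℕ → ℂ) (hc0 : sc 0 = 0)
    (hstruct : ∀ n : ℕ, IsSq q (P n)
      ((Polynomial.C (sa n) * Polynomial.X + Polynomial.C (sb n)) * P n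
        + Polynomial.C (sc n) * P (n - 1))) :
    (∀ n : ℕ, sa n = 0 ∧ sb n = alphaN q n) ∧
    (∀ n : ℕ, 1 ≤ n →
      sc n = (alphaN q n - alphaN q (n - 1)) * ∑ j ∈ Finset.range n, B j) := by
  have hP0 : P 0 = 1 := (hmonic 0).natDegree_eq_zero.mp (hdeg 0)
  have hPtop : ∀ n, (P n).coeff n = 1 := by
    intro n
    have h := hmonic n
    rwa [Polynomial.Monic, Polynomial.leadingCoeff, hdeg n] at h
  have hcoeff : ∀ n : ℕ, (P (n+1)).coeff n = -∑ j ∈ Finset.range (n+1), B j := by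
    intro n
    induction n with
    | zero =>
      have h1 : P 1 = Polynomial.X - Polynomial.C (B 0) := by
        have h0 := hrec0
        rw [hP0] at h0
        linear_combination -h0
      rw [h1, Polynomial.coeff_sub, Polynomial.coeff_X_zero, Polynomial.coeff_C_zero]
      simp
    | succ n ih =>
      have h3 : P (n+2) = Polynomial.X * P (n+1) - Polynomial.C (B (n+1)) * P (n+1)
          - Polynomial.C (C (n+1)) * P n := by linear_combination -(hrec n)
      rw [h3, Polynomial.coeff_sub, Polynomial.coeff_sub, Polynomial.coeff_X_mul, ih,
        Polynomial.coeff_C_mul, Polynomial.coeff_C_mul, hPtop (n+1),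
        Polynomial.coeff_eq_zero_of_natDegree_lt (by rw [hdeg]; omega),
      ]
      simp [Finset.sum_range_succ]
      ring
  have main : ∀ n : ℕ, sa n = 0 ∧ sb n = alphaN q n ∧
      (1 ≤ n → sc n = (alphaN q (n-1) - alphaN q n) * (P n).coeff (n-1)) := by
    intro n
    obtain ⟨g, hg, hgdeg, hg1, hg2⟩ := exSq hq0 n (P n) (le_of_eq (hdeg n))
    have hQ : Polynomial.C (sa n) * (Polynomial.X * P n) + Polynomial.C (sb n) * P n
        + Polynomial.C (sc n) * P (n-1) = g := by
      rw [← sq_unique (hstruct n) hg]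
      ring
    have hdegsub : (P (n-1)).natDegree < n + 1 := by rw [hdeg]; omega
    have ha : sa n = 0 := by
      have hc := congrArg (fun p => Polynomial.coeff p (n+1)) hQ
      simp only [Polynomial.coeff_add, Polynomial.coeff_C_mul, Polynomial.coeff_X_mul,
        hPtop n] at hc
      rw [Polynomial.coeff_eq_zero_of_natDegree_lt (by rw [hdeg]; omega),
        Polynomial.coeff_eq_zero_of_natDegree_lt hdegsub,
        Polynomial.coeff_eq_zero_of_natDegree_lt (lt_of_le_of_lt hgdeg (by omega))] at hc
      simpa using hc
    have hQ' : Polynomial.C (sb n) * P n + Polynomial.C (sc n) * P (n-1) = g := by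
      rw [← hQ, ha]
      simp
    have hb : sb n = alphaN q n := by
      have hc := congrArg (fun p => Polynomial.coeff p n) hQ'
      simp only [Polynomial.coeff_add, Polynomial.coeff_C_mul, hPtop n, hg1, hPtop n] at hc
      rcases Nat.eq_zero_or_pos n with h0 | h0
      · subst h0
        rw [hc0] at hc
        simpa [hPtop 0] using hc
      · rw [Polynomial.coeff_eq_zero_of_natDegree_lt (by rw [hdeg]; omega)] at hc
        simpa [hPtop n] using hc
    refine ⟨ha, hb, ?_⟩
    intro hn
    obtain ⟨m, rfl⟩ : ∃ m, n = m + 1 := ⟨n - 1, by omega⟩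
    simp only [Nat.add_sub_cancel] at hg2
    have hc := congrArg (fun p => Polynomial.coeff p m) hQ'
    simp only [Polynomial.coeff_add, Polynomial.coeff_C_mul, Nat.add_sub_cancel, hPtop m,
      hb, hg2, hPtop] at hc
    simp only [Nat.add_sub_cancel]
    linear_combination hc
  constructor
  · exact fun n => ⟨(main n).1, (main n).2.1⟩
  · intro n hn
    obtain ⟨m, rfl⟩ : ∃ m, n = m + 1 := ⟨n - 1, by omega⟩
    have h := (main (m+1)).2.2 (by omega)
    rw [Nat.add_sub_cancel] at h ⊢
    rw [h, hcoeff m]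
    ring
end

section
/- Let T̂_n denote the monic Chebyshev polynomials of the first kind. Then S_q T̂_n = α_n·T̂_n for every n ≥ 0; equivalently, for every nonzero z ∈ ℂ and every n ≥ 0, (T̂_n(x₊(z)) + T̂_n(x₋(z)))/2 = α_n·T̂_n(x(z)). -/
lemma T_eval_pair (z : ℂ) (hz : z ≠ 0) (n : ℕ) :
    (Polynomial.Chebyshev.T ℂ (n : ℤ)).eval ((z + z⁻¹)/2) = (z^n + (z^n)⁻¹)/2 ∧
    (Polynomial.Chebyshev.T ℂ ((n : ℤ)+1)).eval ((z + z⁻¹)/2) = (z^(n+1) + (z^(n+1))⁻¹)/2 := by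
  induction n with
  | zero => simp [Polynomial.Chebyshev.T_zero, Polynomial.Chebyshev.T_one]
  | succ n ih =>
    obtain ⟨h1, h2⟩ := ih
    refine ⟨by exact_mod_cast h2, ?_⟩
    have h3 := Polynomial.Chebyshev.T_add_two ℂ (n : ℤ)
    have : (Polynomial.Chebyshev.T ℂ ((n : ℤ) + 2)).eval ((z + z⁻¹)/2)
        = 2 * ((z + z⁻¹)/2) * ((z^(n+1) + (z^(n+1))⁻¹)/2) - (z^n + (z^n)⁻¹)/2 := by
      rw [h3]; simp [h1, h2]
    have hcast : ((n : ℤ) + 1 + 1 : ℤ) = (n : ℤ) + 2 := by ring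
    rw [show ((n+1 : ℕ) : ℤ) + 1 = (n : ℤ) + 2 by push_cast; ring, this]
    have hw : z * z⁻¹ = 1 := mul_inv_cancel₀ hz
    simp only [← inv_pow]
    linear_combination ((z⁻¹^n + z^n)/2) * hw

lemma rp_half_ne (q : ℝ) (hq0 : 0 < q) : rp q (1/2) ≠ 0 := by
  simp only [rp, ne_eq, Complex.ofReal_eq_zero]
  positivity

lemma rp_neg_half (q : ℝ) (hq0 : 0 < q) : rp q (-(1/2)) = (rp q (1/2))⁻¹ := by
  simp only [rp, Real.rpow_neg hq0.le, Complex.ofReal_inv]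

lemma rp_half_pow (q : ℝ) (hq0 : 0 < q) (n : ℕ) : rp q ((n : ℝ)/2) = (rp q (1/2))^n := by
  simp only [rp, ← Complex.ofReal_pow]
  congr 1
  rw [← Real.rpow_natCast (q ^ ((1:ℝ)/2)) n, ← Real.rpow_mul hq0.le]
  ring_nf

lemma rp_neg_half_pow (q : ℝ) (hq0 : 0 < q) (n : ℕ) :
    rp q (-((n : ℝ)/2)) = ((rp q (1/2))^n)⁻¹ := by
  simp only [rp, Real.rpow_neg hq0.le, Complex.ofReal_inv, ← Complex.ofReal_pow]
  congr 2
  rw [← Real.rpow_natCast (q ^ ((1:ℝ)/2)) n, ← Real.rpow_mul hq0.le]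
  ring_nf

theorem stmt9 (q : ℝ) (hq0 : 0 < q) (hq1 : q < 1) :
    ∀ n : ℕ, IsSq q (chebM n) (Polynomial.C (alphaN q n) * chebM n) := by
  intro n z hz
  set s := rp q (1/2) with hs_def
  have hs : s ≠ 0 := rp_half_ne q hq0
  have hneg : rp q (-(1/2)) = s⁻¹ := rp_neg_half q hq0
  rcases Nat.eq_zero_or_pos n with h0 | hpos
  · subst h0
    simp only [chebM, if_pos rfl, alphaN, Nat.cast_zero, zero_div, neg_zero, rp,
      Real.rpow_zero, Complex.ofReal_one, mul_one, Polynomial.eval_one, Polynomial.eval_C]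
    norm_num
  · have hn : n ≠ 0 := hpos.ne'
    have hxp : xp q z = xl (s * z) := by
      rw [xp, xl, hneg, mul_inv, ← hs_def]
    have hxm : xm q z = xl (s⁻¹ * z) := by
      rw [xm, xl, hneg, mul_inv, inv_inv, ← hs_def]
    have e1 := (T_eval_pair z hz n).1
    have e2 := (T_eval_pair (s * z) (mul_ne_zero hs hz) n).1
    have e3 := (T_eval_pair (s⁻¹ * z) (mul_ne_zero (inv_ne_zero hs) hz) n).1
    have hα : alphaN q n = (s^n + (s^n)⁻¹)/2 := by
      rw [alphaN, rp_half_pow q hq0, rp_neg_half_pow q hq0]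
    simp only [chebM, if_neg hn, Polynomial.eval_mul, Polynomial.eval_C, Polynomial.eval_smul,
      hxp, hxm, smul_eq_mul]
    simp only [xl]
    rw [e1, e2, e3, hα]
    have hsn : s^n ≠ 0 := pow_ne_zero _ hs
    have hzn : z^n ≠ 0 := pow_ne_zero _ hz
    rw [mul_pow, mul_pow, inv_pow, mul_inv, mul_inv, inv_inv]
    field_simp
    ring
end
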